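/- Let γ₁₂, γ₂₁ be class-K functions with γ₁₂∘γ₂₁(s) < s for all s > 0. Suppose nonnegative reals b₁, b₂ satisfy b₁ ≤ max{γ₁₂(b₂), c₁} and b₂ ≤ max{γ₂₁(b₁), c₂} for some nonnegative constants c₁, c₂. Then b₁ ≤ max{γ₁₂(c₂), c₁} and b₂ ≤ max{γ₂₁(c₁), c₂}. -/

import Mathlib

open NNReal

def ClassK (γ : ℝ≥0 → ℝ≥0) : Prop := Continuous γ ∧ StrictMono γ ∧ γ 0 = 0

theorem smallgain_fixed_point_elimination (γ₁₂ γ₂₁ : ℝ≥0 → ℝ≥0)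
    (h₁₂ : ClassK γ₁₂) (h₂₁ : ClassK γ₂₁)
    (hsg : ∀ s : ℝ≥0, 0 < s → γ₁₂ (γ₂₁ s) < s)
    (b₁ b₂ c₁ c₂ : ℝ≥0)
    (hb₁ : b₁ ≤ max (γ₁₂ b₂) c₁) (hb₂ : b₂ ≤ max (γ₂₁ b₁) c₂) :
    b₁ ≤ max (γ₁₂ c₂) c₁ ∧ b₂ ≤ max (γ₂₁ c₁) c₂ := by
  obtain ⟨-, hm₁₂, hz₁₂⟩ := h₁₂
  obtain ⟨-, hm₂₁, hz₂₁⟩ := h₂₁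
  have hsg' : ∀ s : ℝ≥0, 0 < s → γ₂₁ (γ₁₂ s) < s := by
    intro s hs
    by_contra h
    push_neg at h
    have hpos : 0 < γ₁₂ s := by
      have := hm₁₂ hs
      rwa [hz₁₂] at this
    have h1 := hsg (γ₁₂ s) hpos
    have h2 := hm₁₂.monotone h
    exact absurd (h2.trans_lt h1) (lt_irrefl _)
  constructor
  · rcases eq_or_lt_of_le (zero_le : 0 ≤ b₁) with h | hbpos
    · simp [← h]
    have key : b₁ ≤ max (max (γ₁₂ (γ₂₁ b₁)) (γ₁₂ c₂)) c₁ := by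
      calc b₁ ≤ max (γ₁₂ b₂) c₁ := hb₁
        _ ≤ max (γ₁₂ (max (γ₂₁ b₁) c₂)) c₁ :=
          max_le_max (hm₁₂.monotone hb₂) le_rfl
        _ = max (max (γ₁₂ (γ₂₁ b₁)) (γ₁₂ c₂)) c₁ := by
          rw [hm₁₂.monotone.map_max]
    rcases le_max_iff.mp key with h | h
    · rcases le_max_iff.mp h with h' | h'
      · exact absurd (h'.trans_lt (hsg b₁ hbpos)) (lt_irrefl _)
      · exact le_max_of_le_left h'
    · exact le_max_of_le_right h
  · rcases eq_or_lt_of_le (zero_le : 0 ≤ b₂) with h | hbpos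
    · simp [← h]
    have key : b₂ ≤ max (max (γ₂₁ (γ₁₂ b₂)) (γ₂₁ c₁)) c₂ := by
      calc b₂ ≤ max (γ₂₁ b₁) c₂ := hb₂
        _ ≤ max (γ₂₁ (max (γ₁₂ b₂) c₁)) c₂ :=
          max_le_max (hm₂₁.monotone hb₁) le_rfl
        _ = max (max (γ₂₁ (γ₁₂ b₂)) (γ₂₁ c₁)) c₂ := by
          rw [hm₂₁.monotone.map_max]
    rcases le_max_iff.mp key with h | h
    · rcases le_max_iff.mp h with h' | h'
      · exact absurd (h'.trans_lt (hsg' b₂ hbpos)) (lt_irrefl _)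
      · exact le_max_of_le_left h'
    · exact le_max_of_le_right h
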